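/- (Explicit solitary-wave solution: m = 1 limit of solution (4.2.2).) Let a, b, d ∈ ℝ with b − 2d ≠ 0, let λ > 0 and σ ≠ 0, and define sech t = 1/cosh t, η(ξ) = (a² − σ²(b−2d)(b − 2d − 4adλ²))/(σ²(b−2d)²) − (12adλ²/(b−2d))·sech²(λξ), w(ξ) = (a + σ²(b−2d)(1 − 4dλ²))/(σ(b−2d)) + 12dλ²σ·sech²(λξ). Then (η, w) satisfies, for all ξ ∈ ℝ, the traveling-wave ODE system of the abcd-system with c = 0: −σ·η′(ξ) + w′(ξ) + (η·w)′(ξ) + a·w‴(ξ) + b·σ·η‴(ξ) = 0 and −σ·w′(ξ) + η′(ξ) + w(ξ)·w′(ξ) + d·σ·w‴(ξ) = 0. -/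

import Mathlib

lemma hch_aux (lam ξ : ℝ) :
    HasDerivAt (fun x => Real.cosh (lam*x)) (lam * Real.sinh (lam*ξ)) ξ := by
  have h := (Real.hasDerivAt_cosh (lam*ξ)).comp ξ ((hasDerivAt_id ξ).const_mul lam)
  simpa [mul_comm, Function.comp_def] using h

lemma cosh_ne (x : ℝ) : Real.cosh x ≠ 0 := (Real.cosh_pos x).ne'

lemma hS_aux (lam ξ : ℝ) :
    HasDerivAt (fun x => (1/Real.cosh (lam*x))^2)
      (-2*lam*Real.sinh (lam*ξ)/Real.cosh (lam*ξ)^3) ξ := by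
  have h := (((hasDerivAt_const ξ (1:ℝ)).div (hch_aux lam ξ) (cosh_ne _)).pow 2)
  refine h.congr_deriv (Eq.symm ?_)
  simp only [Pi.pow_apply, Pi.div_apply]
  norm_num
  field_simp

lemma hS1_aux (lam ξ : ℝ) :
    HasDerivAt (fun x => -2*lam*Real.sinh (lam*x)/Real.cosh (lam*x)^3)
      (lam^2*(4*Real.cosh (lam*ξ)^2-6)/Real.cosh (lam*ξ)^4) ξ := by
  have hsh : HasDerivAt (fun x => Real.sinh (lam*x)) (lam * Real.cosh (lam*ξ)) ξ := by
    have h := (Real.hasDerivAt_sinh (lam*ξ)).comp ξ ((hasDerivAt_id ξ).const_mul lam)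
    simpa [mul_comm, Function.comp_def] using h
  have h := ((hsh.const_mul (-2*lam)).div ((hch_aux lam ξ).pow 3)
      (pow_ne_zero _ (cosh_ne _)))
  refine h.congr_deriv (Eq.symm ?_)
  simp only [Pi.pow_apply]
  have hid := Real.cosh_sq_sub_sinh_sq (lam*ξ)
  field_simp
  linear_combination (6*lam^2*Real.cosh (lam*ξ)^2) * hid

lemma hS2_aux (lam ξ : ℝ) :
    HasDerivAt (fun x => lam^2*(4*Real.cosh (lam*x)^2-6)/Real.cosh (lam*x)^4)
      (lam^3*Real.sinh (lam*ξ)*(24-8*Real.cosh (lam*ξ)^2)/Real.cosh (lam*ξ)^5) ξ := by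
  have hnum : HasDerivAt (fun x => lam^2*(4*Real.cosh (lam*x)^2-6))
      (lam^2*(8*Real.cosh (lam*ξ)*(lam*Real.sinh (lam*ξ)))) ξ := by
    have h := ((((hch_aux lam ξ).pow 2).const_mul (4:ℝ)).sub_const 6).const_mul (lam^2)
    refine h.congr_deriv (Eq.symm ?_)
    norm_num
    left
    ring
  have h := hnum.div ((hch_aux lam ξ).pow 4) (pow_ne_zero _ (cosh_ne _))
  refine h.congr_deriv (Eq.symm ?_)
  simp only [Pi.pow_apply, Pi.div_apply]
  field_simp
  ring

/-- the explicit solitary-wave solution obtained as the `m = 1` limit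
of solution (4.2.2) solves the traveling-wave ODE system of the abcd-system with
`c = 0`. -/
theorem abcd_solitary_wave_from_4_2_2
    (a b d σ lam : ℝ) (hbd : b - 2*d ≠ 0) (hlam : 0 < lam) (hσ : σ ≠ 0)
    (η w : ℝ → ℝ)
    (hη : ∀ ξ : ℝ, η ξ = (a^2 - σ^2*(b - 2*d)*(b - 2*d - 4*a*d*lam^2))
        / (σ^2*(b - 2*d)^2)
        - (12*a*d*lam^2/(b - 2*d)) * (1 / Real.cosh (lam * ξ)) ^ 2)
    (hw : ∀ ξ : ℝ, w ξ = (a + σ^2*(b - 2*d)*(1 - 4*d*lam^2)) / (σ*(b - 2*d))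
        + 12*d*lam^2*σ * (1 / Real.cosh (lam * ξ)) ^ 2) :
    ∀ ξ : ℝ,
      (-σ * deriv η ξ + deriv w ξ + deriv (fun x => η x * w x) ξ
        + a * deriv (deriv (deriv w)) ξ + b * σ * deriv (deriv (deriv η)) ξ = 0) ∧
      (-σ * deriv w ξ + deriv η ξ + w ξ * deriv w ξ
        + d * σ * deriv (deriv (deriv w)) ξ = 0) := by
  set A : ℝ := (a^2 - σ^2*(b - 2*d)*(b - 2*d - 4*a*d*lam^2)) / (σ^2*(b - 2*d)^2) with hA
  set B : ℝ := 12*a*d*lam^2/(b - 2*d) with hB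
  set C : ℝ := (a + σ^2*(b - 2*d)*(1 - 4*d*lam^2)) / (σ*(b - 2*d)) with hC
  set D : ℝ := 12*d*lam^2*σ with hD
  have hηf : η = fun x => A - B * (1/Real.cosh (lam*x))^2 := funext fun x => hη x
  have hwf : w = fun x => C + D * (1/Real.cosh (lam*x))^2 := funext fun x => hw x
  have Hη : ∀ t : ℝ, HasDerivAt η
      (-(B * (-2*lam*Real.sinh (lam*t)/Real.cosh (lam*t)^3))) t := by
    rw [hηf]; exact fun t => ((hS_aux lam t).const_mul B).const_sub A
  have Hw : ∀ t : ℝ, HasDerivAt w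
      (D * (-2*lam*Real.sinh (lam*t)/Real.cosh (lam*t)^3)) t := by
    rw [hwf]; exact fun t => ((hS_aux lam t).const_mul D).const_add C
  have hdη : deriv η = fun t => -(B * (-2*lam*Real.sinh (lam*t)/Real.cosh (lam*t)^3)) :=
    funext fun t => (Hη t).deriv
  have hdw : deriv w = fun t => D * (-2*lam*Real.sinh (lam*t)/Real.cosh (lam*t)^3) :=
    funext fun t => (Hw t).deriv
  have H2η : ∀ t : ℝ, HasDerivAt (deriv η)
      (-(B * (lam^2*(4*Real.cosh (lam*t)^2-6)/Real.cosh (lam*t)^4))) t := by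
    rw [hdη]; exact fun t => ((hS1_aux lam t).const_mul B).neg
  have H2w : ∀ t : ℝ, HasDerivAt (deriv w)
      (D * (lam^2*(4*Real.cosh (lam*t)^2-6)/Real.cosh (lam*t)^4)) t := by
    rw [hdw]; exact fun t => (hS1_aux lam t).const_mul D
  have hd2η : deriv (deriv η)
      = fun t => -(B * (lam^2*(4*Real.cosh (lam*t)^2-6)/Real.cosh (lam*t)^4)) := by
    rw [hdη]; exact funext fun t => (((hS1_aux lam t).const_mul B).neg).deriv
  have hd2w : deriv (deriv w)
      = fun t => D * (lam^2*(4*Real.cosh (lam*t)^2-6)/Real.cosh (lam*t)^4) := by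
    rw [hdw]; exact funext fun t => ((hS1_aux lam t).const_mul D).deriv
  have hd3η : deriv (deriv (deriv η))
      = fun t => -(B * (lam^3*Real.sinh (lam*t)*(24-8*Real.cosh (lam*t)^2)/Real.cosh (lam*t)^5)) := by
    rw [hd2η]; exact funext fun t => (((hS2_aux lam t).const_mul B).neg).deriv
  have hd3w : deriv (deriv (deriv w))
      = fun t => D * (lam^3*Real.sinh (lam*t)*(24-8*Real.cosh (lam*t)^2)/Real.cosh (lam*t)^5) := by
    rw [hd2w]; exact funext fun t => ((hS2_aux lam t).const_mul D).deriv
  intro ξ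
  have e1 := (Hη ξ).deriv
  have e2 := (Hw ξ).deriv
  have e3 : deriv (fun x => η x * w x) ξ = _ := ((Hη ξ).mul (Hw ξ)).deriv
  have e4 := congrFun hd3η ξ
  have e5 := congrFun hd3w ξ
  have hc := (Real.cosh_pos (x := lam*ξ)).ne'
  constructor
  · rw [e1, e2, e3, e4, e5, hη ξ, hw ξ, hA, hB, hC, hD]
    field_simp [show b - d*2 ≠ 0 by intro h; exact hbd (by linarith)]
    ring
  · rw [e1, e2, e5, hw ξ, hB, hC, hD]
    field_simp [show b - d*2 ≠ 0 by intro h; exact hbd (by linarith)]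
    ring
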